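/- Let A ∈ ℝ^{m×n}, let Θ ∈ ℝ^{n×n} be diagonal with strictly positive diagonal entries, let N ⊆ {1,…,n} be a subset of column indices with complement B, let A_N (resp. A_B) be the submatrix of A formed by the columns in N (resp. B) and Θ_N, Θ_B the corresponding principal submatrices of Θ. Let δ_d > 0, S = A_N Θ_N A_Nᵀ, R = off(S), and K = AΘAᵀ + δ_d I_m (which is symmetric positive definite). Then every eigenvalue of the symmetric matrix K^{-1/2} R K^{-1/2} is strictly less than 1. -/

import Mathlib

open Matrix

/-- off(B): same off-diagonal entries as B, zero diagonal. -/
def offDiag {ι : Type*} [DecidableEq ι] (B : Matrix ι ι ℝ) : Matrix ι ι ℝ :=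
  B - Matrix.diagonal (fun i => B i i)

/-- The positive semidefinite square root of a positive semidefinite matrix, as defined by
`Matrix.PosSemidef.sqrt` in the older Mathlib (since removed). -/
noncomputable def posSemidefSqrt {n : Type*} [Fintype n] [DecidableEq n] {A : Matrix n n ℝ}
    (hA : A.PosSemidef) : Matrix n n ℝ :=
  hA.1.eigenvectorUnitary.1 * Matrix.diagonal ((↑) ∘ (√·) ∘ hA.1.eigenvalues) *
  (star hA.1.eigenvectorUnitary : Matrix n n ℝ)

/-- With `Θ` diagonal positive, `N` a set of column indices, `S = A_N Θ_N A_Nᵀ`,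
`R = off(S)`, `δ_d > 0` and `K = AΘAᵀ + δ_d I` (symmetric positive definite), every
eigenvalue of `K^{-1/2} R K^{-1/2}` is strictly less than 1. -/
theorem stmt_3 {m n : ℕ} (A : Matrix (Fin m) (Fin n) ℝ)
    (d : Fin n → ℝ) (hd : ∀ j, 0 < d j)
    (N : Finset (Fin n))
    (AN : Matrix (Fin m) {j // j ∈ N} ℝ)
    (hAN : AN = A.submatrix id (fun j : {j // j ∈ N} => (j : Fin n)))
    (ThetaN : Matrix {j // j ∈ N} {j // j ∈ N} ℝ)
    (hThetaN : ThetaN = Matrix.diagonal (fun j : {j // j ∈ N} => d j))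
    (δd : ℝ) (hδd : 0 < δd)
    (S R K : Matrix (Fin m) (Fin m) ℝ)
    (hS : S = AN * ThetaN * ANᵀ)
    (hR : R = offDiag S)
    (hK : K = A * Matrix.diagonal d * Aᵀ + δd • (1 : Matrix (Fin m) (Fin m) ℝ))
    (hKpd : K.PosDef) :
    ∀ μ : ℝ, ∀ x : Fin m → ℝ, x ≠ 0 →
      ((posSemidefSqrt hKpd.posSemidef)⁻¹ * R * (posSemidefSqrt hKpd.posSemidef)⁻¹).mulVec x = μ • x →
      μ < 1 := by
  intro μ x hx hxeq
  set Q := posSemidefSqrt hKpd.posSemidef with hQ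
  set W := Q⁻¹ with hWdef
  -- Q is invertible
  have hQQ : Q * Q = K := by
    have hU : (star hKpd.posSemidef.1.eigenvectorUnitary : Matrix (Fin m) (Fin m) ℝ) * hKpd.posSemidef.1.eigenvectorUnitary.1 = 1 :=
      Unitary.star_mul_self_of_mem hKpd.posSemidef.1.eigenvectorUnitary.2
    conv_rhs => rw [hKpd.posSemidef.1.spectral_theorem, Unitary.conjStarAlgAut_apply]
    simp only [hQ, posSemidefSqrt]
    rw [show ∀ a b c d e f : Matrix (Fin m) (Fin m) ℝ, a * b * c * (d * e * f) = a * b * (c * d) * e * f from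
      fun _ _ _ _ _ _ => by noncomm_ring, hU, mul_one, mul_assoc _ (diagonal _) (diagonal _), diagonal_mul_diagonal]
    congr 3
    funext i
    simp [Real.mul_self_sqrt (hKpd.posSemidef.eigenvalues_nonneg i)]
  have hdetK : K.det ≠ 0 := ne_of_gt hKpd.det_pos
  have hdetQ : Q.det ≠ 0 := by
    intro h
    apply hdetK
    rw [← hQQ, det_mul, h, mul_zero]
  have hWQ : W * Q = 1 := nonsing_inv_mul Q (isUnit_iff_ne_zero.mpr hdetQ)
  have hQW : Q * W = 1 := mul_nonsing_inv Q (isUnit_iff_ne_zero.mpr hdetQ)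
  -- W is symmetric
  have hQsym : Qᵀ = Q := by
    simp only [hQ, posSemidefSqrt, transpose_mul, diagonal_transpose, mul_assoc]
    simp only [star_eq_conjTranspose, conjTranspose_eq_transpose_of_trivial, transpose_transpose]
  have hWsym : Wᵀ = W := by rw [hWdef, transpose_nonsing_inv, hQsym]
  -- W K W = 1
  have hWKW : W * K * W = 1 := by
    rw [← hQQ, show W * (Q * Q) * W = (W * Q) * (Q * W) by noncomm_ring, hWQ, hQW, one_mul]
  -- y := W x, nonzero
  set y := W.mulVec x with hy
  have hxy : x = Q.mulVec y := by
    rw [hy, mulVec_mulVec, hQW, one_mulVec]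
  have hyne : y ≠ 0 := by
    intro h
    apply hx
    rw [hxy, h, mulVec_zero]
  -- quadratic form of K - R at y is positive
  set z := Aᵀ.mulVec y with hz
  have hAq : y ⬝ᵥ (A * Matrix.diagonal d * Aᵀ).mulVec y = ∑ j, d j * (z j)^2 := by
    rw [← mulVec_mulVec, ← mulVec_mulVec, dotProduct_mulVec, ← mulVec_transpose]
    simp only [transpose_transpose, dotProduct, mulVec_diagonal, ← hz]
    exact Finset.sum_congr rfl fun _ _ => by ring
  have hANT : ANᵀ.mulVec y = fun j : {j // j ∈ N} => z (j : Fin n) := by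
    funext j
    rw [hAN, hz]
    simp [mulVec, dotProduct, transpose_apply, submatrix_apply]
  have hSq : y ⬝ᵥ S.mulVec y = ∑ j ∈ N, d j * (z j)^2 := by
    rw [hS, hThetaN, ← mulVec_mulVec, ← mulVec_mulVec, dotProduct_mulVec, ← mulVec_transpose]
    rw [hAN]
    simp only [transpose_submatrix, transpose_transpose]
    have : ((Aᵀ).submatrix (fun j : {j // j ∈ N} => (j : Fin n)) id).mulVec y
        = fun j : {j // j ∈ N} => z (j : Fin n) := by
      funext j
      rw [hz]
      simp [mulVec, dotProduct, submatrix_apply]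
    rw [this]
    simp only [dotProduct, mulVec_diagonal]
    rw [← Finset.sum_coe_sort N (fun j => d j * (z j)^2)]
    exact Finset.sum_congr rfl fun _ _ => by ring
  have hSdiag : ∀ i, 0 ≤ S i i := by
    intro i
    rw [hS, hThetaN]
    simp only [mul_apply, transpose_apply, diagonal_apply]
    have : ∀ j : {j // j ∈ N}, (∑ k : {j // j ∈ N},
        AN i k * (if k = j then d (k : Fin n) else 0)) * AN i j
        = d (j : Fin n) * (AN i j)^2 := by
      intro j
      rw [Finset.sum_eq_single j]
      · simp; ring
      · intro b _ hb; simp [hb]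
      · intro h; simp at h
    rw [Finset.sum_congr rfl fun j _ => this j]
    exact Finset.sum_nonneg fun j _ => mul_nonneg (hd _).le (sq_nonneg _)
  have hDq : 0 ≤ y ⬝ᵥ (Matrix.diagonal (fun i => S i i)).mulVec y := by
    simp only [dotProduct, mulVec_diagonal]
    exact Finset.sum_nonneg fun i _ => by
      have := hSdiag i
      nlinarith [sq_nonneg (y i)]
  have hKq : y ⬝ᵥ K.mulVec y = (∑ j, d j * (z j)^2) + δd * (y ⬝ᵥ y) := by
    rw [hK, add_mulVec, dotProduct_add, hAq, smul_mulVec, one_mulVec,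
      dotProduct_smul, smul_eq_mul]
  have hpos : 0 < y ⬝ᵥ (K - R).mulVec y := by
    rw [sub_mulVec, dotProduct_sub, hR, offDiag, sub_mulVec, dotProduct_sub, hKq, hSq]
    have hsplit : (∑ j, d j * (z j)^2) = (∑ j ∈ N, d j * (z j)^2) + ∑ j ∈ Nᶜ, d j * (z j)^2 :=
      (Finset.sum_add_sum_compl N _).symm
    have h1 : 0 ≤ ∑ j ∈ Nᶜ, d j * (z j)^2 :=
      Finset.sum_nonneg fun j _ => mul_nonneg (hd _).le (sq_nonneg _)
    have h0 : 0 ≤ y ⬝ᵥ y := Finset.sum_nonneg fun i _ => mul_self_nonneg _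
    have h2 : 0 < y ⬝ᵥ y := by
      rcases h0.lt_or_eq with h | h
      · exact h
      · exact absurd (dotProduct_self_eq_zero.mp h.symm) hyne
    linarith [hDq, h1, mul_pos hδd h2]
  -- conjugation identity
  have hconj : x ⬝ᵥ ((W * (K - R) * W).mulVec x) = y ⬝ᵥ (K - R).mulVec y := by
    rw [← mulVec_mulVec, ← mulVec_mulVec, dotProduct_mulVec, ← mulVec_transpose, hWsym, ← hy]
  have hsplit2 : W * (K - R) * W = 1 - W * R * W := by
    rw [mul_sub, sub_mul, hWKW]
  have heq : x ⬝ᵥ ((W * (K - R) * W).mulVec x) = (1 - μ) * (x ⬝ᵥ x) := by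
    rw [hsplit2, sub_mulVec, one_mulVec, dotProduct_sub, hxeq, dotProduct_smul, smul_eq_mul]
    ring
  have hxx : 0 < x ⬝ᵥ x := by
    have h0 : 0 ≤ x ⬝ᵥ x := Finset.sum_nonneg fun i _ => mul_self_nonneg _
    rcases h0.lt_or_eq with h | h
    · exact h
    · exact absurd (dotProduct_self_eq_zero.mp h.symm) hx
  rw [hconj] at heq
  nlinarith [hpos, hxx, heq]
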